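/- The weight-5 multiple zeta values satisfy 4ζ(1,4) − 2ζ(2,3) − ζ(3,2) + ζ(1,1,3) + 3ζ(1,2,2) = 0. -/

import Mathlib

/-- Multiple zeta value `ζ(k₁,…,k_r) = Σ_{0<m₁<⋯<m_r} ∏ mᵢ^{-kᵢ}`. -/
noncomputable def mzv (k : List ℕ) : ℝ :=
  ∑' m : {f : Fin k.length → ℕ+ // StrictMono f},
    ∏ i : Fin k.length, ((m.1 i : ℝ) ^ (k.get i))⁻¹

open scoped ENNReal
open Filter

noncomputable def P (n : ℕ+) (a : ℕ) : ℝ≥0∞ := (((n:ℕ):ℝ≥0∞) ^ a)⁻¹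

noncomputable def Z (s : ℕ) : ℝ≥0∞ := ∑' n : ℕ+, P n s
noncomputable def X2 (a b : ℕ) : ℝ≥0∞ := ∑' (m : ℕ+) (u : ℕ+), P m a * P (m+u) b
noncomputable def X3 (a b c : ℕ) : ℝ≥0∞ :=
  ∑' (m : ℕ+) (u : ℕ+) (v : ℕ+), P m a * P (m+u) b * P (m+u+v) c
noncomputable def T2 (a b c : ℕ) : ℝ≥0∞ := ∑' (m : ℕ+) (u : ℕ+), P m a * P u b * P (m+u) c
noncomputable def Hterm (N : ℕ+) : ℝ≥0∞ :=
  ∑' k : ℕ+, if (k:ℕ) ≤ (N:ℕ) then P k 1 else 0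


-- from t2.lean
lemma cast_ne_zero' (n : ℕ+) : ((n:ℕ):ℝ≥0∞) ≠ 0 := by simp [n.pos.ne']

lemma P_ne_top (n : ℕ+) (a : ℕ) : P n a ≠ ⊤ := by
  simp [P, pow_eq_zero_iff', n.pos.ne']

lemma P_ne_zero (n : ℕ+) (a : ℕ) : P n a ≠ 0 := by
  simp only [P, ne_eq, ENNReal.inv_eq_zero]
  exact ENNReal.pow_ne_top (by simp)

lemma P_zero (n : ℕ+) : P n 0 = 1 := by simp [P]

lemma P_mul (n : ℕ+) (a b : ℕ) : P n a * P n b = P n (a+b) := by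
  rw [P, P, P, pow_add, ENNReal.mul_inv (Or.inl (by simp [pow_eq_zero_iff', n.pos.ne']))
    (Or.inr (by simp [pow_eq_zero_iff', n.pos.ne']))]

lemma key (m u : ℕ+) : P m 1 * P u 1 = P (m+u) 1 * P m 1 + P (m+u) 1 * P u 1 := by
  have hm : ((m:ℕ):ℝ≥0∞) ≠ 0 := cast_ne_zero' m
  have hu : ((u:ℕ):ℝ≥0∞) ≠ 0 := cast_ne_zero' u
  have hmu : (((m+u:ℕ+):ℕ):ℝ≥0∞) = ((m:ℕ):ℝ≥0∞) + ((u:ℕ):ℝ≥0∞) := by push_cast; ring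
  simp only [P, pow_one, ← mul_add, hmu]
  have h1 : ((m:ℕ):ℝ≥0∞)⁻¹ + ((u:ℕ):ℝ≥0∞)⁻¹
      = (((m:ℕ):ℝ≥0∞) + ((u:ℕ):ℝ≥0∞)) * (((m:ℕ):ℝ≥0∞)⁻¹ * ((u:ℕ):ℝ≥0∞)⁻¹) := by
    have t1 : ((m:ℕ):ℝ≥0∞) * (((m:ℕ):ℝ≥0∞)⁻¹ * ((u:ℕ):ℝ≥0∞)⁻¹) = ((u:ℕ):ℝ≥0∞)⁻¹ := by
      rw [← mul_assoc, ENNReal.mul_inv_cancel hm (by simp), one_mul]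
    have t2 : ((u:ℕ):ℝ≥0∞) * (((m:ℕ):ℝ≥0∞)⁻¹ * ((u:ℕ):ℝ≥0∞)⁻¹) = ((m:ℕ):ℝ≥0∞)⁻¹ := by
      rw [mul_comm (((m:ℕ):ℝ≥0∞))⁻¹ (((u:ℕ):ℝ≥0∞))⁻¹, ← mul_assoc,
        ENNReal.mul_inv_cancel hu (by simp), one_mul]
    rw [add_mul, t1, t2, add_comm]
  rw [h1, ← mul_assoc, ENNReal.inv_mul_cancel (by simp [add_eq_zero, hm]) (by simp), one_mul]

-- from t3.lean
lemma plt_add (k j : ℕ+) : k < k + j := by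
  rw [← PNat.coe_lt_coe, PNat.add_coe]
  have := j.pos; omega

lemma tri2 (F : ℕ+ → ℕ+ → ℝ≥0∞) :
    ∑' (k : ℕ+) (m : ℕ+), F k m
      = (∑' (k : ℕ+) (j : ℕ+), F k (k+j)) + (∑' (k : ℕ+), F k k)
        + ∑' (m : ℕ+) (d : ℕ+), F (m+d) m := by
  have e0 : ∑' (k : ℕ+) (m : ℕ+), F k m = ∑' p : ℕ+ × ℕ+, F p.1 p.2 :=
    (ENNReal.tsum_prod' (f := fun p : ℕ+ × ℕ+ => F p.1 p.2)).symm
  rw [e0]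
  have split : ∀ p : ℕ+ × ℕ+, F p.1 p.2
      = (if p.1 < p.2 then F p.1 p.2 else 0)
        + ((if p.1 = p.2 then F p.1 p.2 else 0)
        + (if p.2 < p.1 then F p.1 p.2 else 0)) := by
    intro p
    rcases lt_trichotomy p.1 p.2 with h | h | h
    · simp [h, not_lt_of_gt h, ne_of_lt h]
    · simp [h, lt_irrefl]
    · simp [h, not_lt_of_gt h, (ne_of_lt h).symm]
  calc ∑' p : ℕ+ × ℕ+, F p.1 p.2
      = ∑' p : ℕ+ × ℕ+, ((if p.1 < p.2 then F p.1 p.2 else 0)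
          + ((if p.1 = p.2 then F p.1 p.2 else 0)
          + (if p.2 < p.1 then F p.1 p.2 else 0))) := tsum_congr split
    _ = (∑' p : ℕ+ × ℕ+, if p.1 < p.2 then F p.1 p.2 else 0)
          + ((∑' p : ℕ+ × ℕ+, if p.1 = p.2 then F p.1 p.2 else 0)
          + (∑' p : ℕ+ × ℕ+, if p.2 < p.1 then F p.1 p.2 else 0)) := by
        rw [ENNReal.tsum_add]; congr 1; rw [ENNReal.tsum_add]
    _ = (∑' p : ℕ+ × ℕ+, F p.1 (p.1+p.2)) + ((∑' k : ℕ+, F k k)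
          + (∑' p : ℕ+ × ℕ+, F (p.2+p.1) p.2)) := by
        congr 1
        · have hinj : Function.Injective (fun p : ℕ+ × ℕ+ => (p.1, p.1 + p.2)) := by
            intro a b h
            simp only [Prod.mk.injEq] at h
            obtain ⟨h1, h2⟩ := h
            refine Prod.ext h1 (PNat.coe_injective ?_)
            have c2 := congrArg PNat.val h2
            have c1 := congrArg PNat.val h1
            simp only [PNat.add_coe] at c2
            omega
          rw [← hinj.tsum_eq (f := fun p : ℕ+ × ℕ+ =>
            if p.1 < p.2 then F p.1 p.2 else 0) ?_]
          · exact tsum_congr fun p => by simp [plt_add]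
          · intro x hx
            obtain ⟨a, b⟩ := x
            have hab : a < b := by
              by_contra hc
              simp [Function.mem_support, hc] at hx
            refine ⟨(a, ⟨(b:ℕ) - (a:ℕ), by have := (PNat.coe_lt_coe _ _).2 hab; omega⟩), ?_⟩
            refine Prod.ext rfl (PNat.coe_injective ?_)
            have := (PNat.coe_lt_coe _ _).2 hab
            show (a:ℕ) + ((b:ℕ) - (a:ℕ)) = (b:ℕ)
            omega
        congr 1
        · have hinj : Function.Injective (fun k : ℕ+ => (k, k)) := by
            intro a b h
            simpa using congrArg Prod.fst h
          rw [← hinj.tsum_eq (f := fun p : ℕ+ × ℕ+ =>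
            if p.1 = p.2 then F p.1 p.2 else 0) ?_]
          · exact tsum_congr fun k => by simp
          · intro x hx
            obtain ⟨a, b⟩ := x
            have hab : a = b := by
              by_contra hc
              simp [Function.mem_support, hc] at hx
            exact ⟨a, by rw [hab]⟩
        · have hinj : Function.Injective (fun p : ℕ+ × ℕ+ => (p.2 + p.1, p.2)) := by
            intro a b h
            simp only [Prod.mk.injEq] at h
            obtain ⟨h1, h2⟩ := h
            refine Prod.ext (PNat.coe_injective ?_) h2
            have c1 := congrArg PNat.val h1
            have c2 := congrArg PNat.val h2
            simp only [PNat.add_coe] at c1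
            omega
          rw [← hinj.tsum_eq (f := fun p : ℕ+ × ℕ+ =>
            if p.2 < p.1 then F p.1 p.2 else 0) ?_]
          · exact tsum_congr fun p => by simp [plt_add]
          · intro x hx
            obtain ⟨a, b⟩ := x
            have hab : b < a := by
              by_contra hc
              simp [Function.mem_support, hc] at hx
            refine ⟨(⟨(a:ℕ) - (b:ℕ), by have := (PNat.coe_lt_coe _ _).2 hab; omega⟩, b), ?_⟩
            refine Prod.ext (PNat.coe_injective ?_) rfl
            have := (PNat.coe_lt_coe _ _).2 hab
            show (b:ℕ) + ((a:ℕ) - (b:ℕ)) = (a:ℕ)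
            omega
    _ = (∑' (k : ℕ+) (j : ℕ+), F k (k+j)) + ((∑' (k : ℕ+), F k k)
          + ∑' (m : ℕ+) (d : ℕ+), F (m+d) m) := by
        have e1 : ∑' p : ℕ+ × ℕ+, F p.1 (p.1+p.2) = ∑' (k : ℕ+) (j : ℕ+), F k (k+j) :=
          ENNReal.tsum_prod' (f := fun p : ℕ+ × ℕ+ => F p.1 (p.1+p.2))
        have e2 : ∑' p : ℕ+ × ℕ+, F (p.2+p.1) p.2 = ∑' (a : ℕ+) (b : ℕ+), F (b+a) b :=
          ENNReal.tsum_prod' (f := fun p : ℕ+ × ℕ+ => F (p.2+p.1) p.2)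
        rw [e1, e2]
        congr 2
        exact ENNReal.tsum_comm (f := fun a b => F (b+a) b)
    _ = _ := by rw [add_assoc]

-- from t4.lean
lemma tswap (a b c : ℕ) : T2 a b c = T2 b a c := by
  rw [T2, ENNReal.tsum_comm]
  refine tsum_congr fun u => tsum_congr fun m => ?_
  rw [add_comm m u]; ring

lemma tbase (a c : ℕ) : T2 a 0 c = X2 a c := by
  refine tsum_congr fun m => tsum_congr fun u => ?_
  rw [P_zero, mul_one]

lemma pf_step (a b c : ℕ) : T2 (a+1) (b+1) c = T2 (a+1) b (c+1) + T2 a (b+1) (c+1) := by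
  have pt : ∀ m u : ℕ+, P m (a+1) * P u (b+1) * P (m+u) c
      = P m (a+1) * P u b * P (m+u) (c+1) + P m a * P u (b+1) * P (m+u) (c+1) := by
    intro m u
    calc P m (a+1) * P u (b+1) * P (m+u) c
        = (P m a * P u b * P (m+u) c) * (P m 1 * P u 1) := by
          rw [← P_mul m a 1, ← P_mul u b 1]; ring
      _ = (P m a * P u b * P (m+u) c) * (P (m+u) 1 * P m 1 + P (m+u) 1 * P u 1) := by
          rw [key]
      _ = P m (a+1) * P u b * P (m+u) (c+1) + P m a * P u (b+1) * P (m+u) (c+1) := by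
          rw [mul_add, ← P_mul m a 1, ← P_mul u b 1, ← P_mul (m+u) c 1]; ring
  calc T2 (a+1) (b+1) c
      = ∑' (m : ℕ+) (u : ℕ+), (P m (a+1) * P u b * P (m+u) (c+1)
          + P m a * P u (b+1) * P (m+u) (c+1)) :=
        tsum_congr fun m => tsum_congr fun u => pt m u
    _ = _ := by
        rw [T2, T2, ← ENNReal.tsum_add]
        exact tsum_congr fun m => ENNReal.tsum_add
lemma t113 : T2 1 1 3 = 2 * X2 1 4 := by
  have h := pf_step 0 0 3
  norm_num at h
  rw [h, tbase, tswap 0 1 4, tbase, two_mul]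

lemma t212 : T2 2 1 2 = X2 2 3 + 2 * X2 1 4 := by
  have h := pf_step 1 0 2
  norm_num at h
  rw [h, tbase, t113]

lemma t122 : T2 1 2 2 = X2 2 3 + 2 * X2 1 4 := by rw [tswap, t212]

lemma t311 : T2 3 1 1 = X2 3 2 + (X2 2 3 + 2 * X2 1 4) := by
  have h := pf_step 2 0 1
  norm_num at h
  rw [h, tbase, t212]

lemma t230 : T2 2 3 0 = 2 * (X2 2 3 + 2 * X2 1 4) + (X2 2 3 + 2 * X2 1 4 + X2 3 2) := by
  have h1 := pf_step 1 2 0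
  have h2 := pf_step 1 1 1
  have h3 := pf_step 0 2 1
  norm_num at h1 h2 h3
  rw [h1, h2, h3, t212, t122, tswap 0 3 2, tbase, two_mul]; ring

lemma t111 : T2 1 1 1 = 2 * X2 1 2 := by
  have h := pf_step 0 0 1
  norm_num at h
  rw [h, tbase, tswap 0 1 2, tbase, two_mul]

lemma zmul (a b : ℕ) : Z a * Z b = T2 a b 0 := by
  rw [Z, Z, T2, ← ENNReal.tsum_mul_right]
  refine tsum_congr fun m => ?_
  rw [← ENNReal.tsum_mul_left]
  exact tsum_congr fun u => by rw [P_zero, mul_one]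

-- from t5.lean
lemma zmul' (a b : ℕ) : Z a * Z b = ∑' (k : ℕ+) (m : ℕ+), P k a * P m b := by
  rw [Z, Z, ← ENNReal.tsum_mul_right]
  exact tsum_congr fun m => (ENNReal.tsum_mul_left).symm

lemma E1 : Z 2 * Z 3 = X2 2 3 + Z 5 + X2 3 2 := by
  rw [zmul', tri2 (fun k m => P k 2 * P m 3)]
  congr 1
  · congr 1
    exact tsum_congr fun k => by rw [P_mul]
  · exact tsum_congr fun m => tsum_congr fun d => by rw [mul_comm]

lemma E4 : Z 2 * X2 1 2 = X3 2 1 2 + X2 3 2 + (X3 1 2 2 + X2 1 4 + X3 1 2 2) := by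
  have l0 : Z 2 * X2 1 2 = ∑' (k : ℕ+) (m : ℕ+), P k 2 * ∑' (u : ℕ+), P m 1 * P (m+u) 2 := by
    rw [Z, X2, ← ENNReal.tsum_mul_right]
    exact tsum_congr fun k => (ENNReal.tsum_mul_left).symm
  rw [l0, tri2 (fun k m => P k 2 * ∑' (u : ℕ+), P m 1 * P (m+u) 2)]
  congr 1
  · congr 1
    · -- k < m part : X3 2 1 2
      rw [X3]
      refine tsum_congr fun k => tsum_congr fun j => ?_
      rw [← ENNReal.tsum_mul_left]
      exact tsum_congr fun u => by ring
    · -- k = m part : X2 3 2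
      rw [X2]
      refine tsum_congr fun k => ?_
      rw [← ENNReal.tsum_mul_left]
      refine tsum_congr fun u => ?_
      rw [← mul_assoc, P_mul]
  · -- k > m part
    have l1 : ∑' (m : ℕ+) (d : ℕ+), P (m+d) 2 * ∑' (u : ℕ+), P m 1 * P (m+u) 2
        = ∑' (m : ℕ+), P m 1 * ∑' (d : ℕ+) (u : ℕ+), P (m+d) 2 * P (m+u) 2 := by
      refine tsum_congr fun m => ?_
      rw [← ENNReal.tsum_mul_left]
      refine tsum_congr fun d => ?_
      rw [← ENNReal.tsum_mul_left, ← ENNReal.tsum_mul_left]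
      exact tsum_congr fun u => by ring
    rw [l1]
    have l2 : ∀ m : ℕ+, ∑' (d : ℕ+) (u : ℕ+), P (m+d) 2 * P (m+u) 2
        = (∑' (d : ℕ+) (j : ℕ+), P (m+d) 2 * P (m+d+j) 2) + (∑' (d : ℕ+), P (m+d) 4)
          + ∑' (u : ℕ+) (e : ℕ+), P (m+u) 2 * P (m+u+e) 2 := by
      intro m
      rw [tri2 (fun d u => P (m+d) 2 * P (m+u) 2)]
      congr 1
      · congr 1
        · exact tsum_congr fun d => tsum_congr fun j => by rw [← add_assoc]
        · exact tsum_congr fun d => by rw [P_mul]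
      · refine tsum_congr fun u => tsum_congr fun e => ?_
        rw [mul_comm, ← add_assoc]
    calc ∑' (m : ℕ+), P m 1 * ∑' (d : ℕ+) (u : ℕ+), P (m+d) 2 * P (m+u) 2
        = ∑' (m : ℕ+), ((P m 1 * (∑' (d : ℕ+) (j : ℕ+), P (m+d) 2 * P (m+d+j) 2)
            + P m 1 * (∑' (d : ℕ+), P (m+d) 4))
            + P m 1 * (∑' (u : ℕ+) (e : ℕ+), P (m+u) 2 * P (m+u+e) 2)) := by
          refine tsum_congr fun m => ?_
          rw [l2 m, mul_add, mul_add]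
      _ = X3 1 2 2 + X2 1 4 + X3 1 2 2 := by
          rw [ENNReal.tsum_add, ENNReal.tsum_add]
          congr 1
          congr 1
          · rw [X3]
            refine tsum_congr fun m => ?_
            rw [← ENNReal.tsum_mul_left]
            refine tsum_congr fun d => ?_
            rw [← ENNReal.tsum_mul_left]
            exact tsum_congr fun j => by ring
          · rw [X2]
            exact tsum_congr fun m => (ENNReal.tsum_mul_left).symm
          · rw [X3]
            refine tsum_congr fun m => ?_
            rw [← ENNReal.tsum_mul_left]
            refine tsum_congr fun u => ?_
            rw [← ENNReal.tsum_mul_left]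
            exact tsum_congr fun e => by ring

-- from t7.lean
lemma P_ofReal (n : ℕ+) (a : ℕ) : P n a = ENNReal.ofReal (((n:ℕ):ℝ)^a)⁻¹ := by
  rw [ENNReal.ofReal_inv_of_pos (by positivity), ENNReal.ofReal_pow (by positivity),
    ENNReal.ofReal_natCast, P]

/-- telescoping sum -/
lemma hasSum_tele (e : ℕ → ℝ) (hmono : ∀ i, e (i+1) ≤ e i)
    (hlim : Tendsto e atTop (nhds 0)) :
    HasSum (fun i => e i - e (i+1)) (e 0) := by
  rw [hasSum_iff_tendsto_nat_of_nonneg (fun i => by linarith [hmono i]) _]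
  have : ∀ n, ∑ i ∈ Finset.range n, (e i - e (i+1)) = e 0 - e n := fun n =>
    Finset.sum_range_sub' e n
  simp only [this]
  simpa using (tendsto_const_nhds (x := e 0)).sub hlim

lemma tendsto_inv_shift (c : ℝ) : Tendsto (fun i : ℕ => ((i:ℝ)+c)⁻¹) atTop (nhds 0) := by
  apply Filter.Tendsto.comp tendsto_inv_atTop_zero
  apply tendsto_atTop_add_const_right
  exact tendsto_natCast_atTop_atTop

lemma hasSum_shift (n : ℕ) :
    HasSum (fun i : ℕ => ((i:ℝ)+1)⁻¹ - ((i:ℝ)+1+n)⁻¹)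
      (∑ k ∈ Finset.range n, ((k:ℝ)+1)⁻¹) := by
  induction n with
  | zero =>
    have : (fun i : ℕ => ((i:ℝ)+1)⁻¹ - ((i:ℝ)+1+(0:ℕ))⁻¹) = fun _ => (0:ℝ) := by
      funext i; simp
    rw [this]
    simpa using hasSum_zero
  | succ n ih =>
    have h2 : HasSum (fun i : ℕ => ((i:ℝ)+1+n)⁻¹ - ((i:ℝ)+1+(n+1))⁻¹) ((((0:ℕ):ℝ)+1+n)⁻¹) := by
      have := hasSum_tele (fun i => ((i:ℝ)+1+n)⁻¹)
        (fun i => by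
          apply inv_anti₀ (by positivity)
          push_cast; linarith)
        (by simpa [add_assoc] using tendsto_inv_shift (1+n))
      convert this using 2 with i
      push_cast; ring_nf
    have := ih.add h2
    rw [Finset.sum_range_succ]
    convert this using 1
    · funext i; push_cast; ring
    · push_cast; ring

lemma hasSum_g (n : ℕ+) :
    HasSum (fun i : ℕ => (((i:ℝ)+1)*((i:ℝ)+1+(n:ℕ)))⁻¹)
      ((((n:ℕ):ℝ))⁻¹ * ∑ k ∈ Finset.range (n:ℕ), ((k:ℝ)+1)⁻¹) := by
  have h := (hasSum_shift (n:ℕ)).mul_left (((n:ℕ):ℝ))⁻¹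
  convert h using 2 with i
  · rfl
  have h1 : (0:ℝ) < (i:ℝ)+1 := by positivity
  have h3 : (0:ℝ) < ((n:ℕ):ℝ) := by exact_mod_cast n.pos
  have h2 : (0:ℝ) < (i:ℝ)+1+(n:ℕ) := by positivity
  field_simp
  ring

lemma Hterm_eq (N : ℕ+) :
    Hterm N = ENNReal.ofReal (∑ k ∈ Finset.range (N:ℕ), ((k:ℝ)+1)⁻¹) := by
  rw [Hterm, ← Equiv.pnatEquivNat.symm.tsum_eq
    (f := fun k : ℕ+ => if (k:ℕ) ≤ (N:ℕ) then P k 1 else 0)]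
  rw [tsum_eq_sum (s := Finset.range (N:ℕ)) (fun i hi => by
    simp only [Finset.mem_range, not_lt] at hi
    simp [Equiv.pnatEquivNat, Nat.succPNat_coe]
    exact fun h => absurd h (by omega))]
  rw [ENNReal.ofReal_sum_of_nonneg (fun i _ => by positivity)]
  refine Finset.sum_congr rfl fun i hi => ?_
  have : ((i.succPNat : ℕ) ≤ (N:ℕ)) := by
    simp only [Nat.succPNat_coe]
    simp only [Finset.mem_range] at hi
    omega
  simp only [Equiv.pnatEquivNat, Equiv.coe_fn_symm_mk, this, if_true]
  rw [P_ofReal]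
  congr 1
  simp [Nat.succPNat_coe]

lemma glem (n : ℕ+) : ∑' (v : ℕ+), P v 1 * P (v+n) 1 = P n 1 * Hterm n := by
  rw [← Equiv.pnatEquivNat.symm.tsum_eq (f := fun v : ℕ+ => P v 1 * P (v+n) 1)]
  have hterm : ∀ i : ℕ, P (Equiv.pnatEquivNat.symm i) 1 * P (Equiv.pnatEquivNat.symm i + n) 1
      = ENNReal.ofReal ((((i:ℝ)+1)*((i:ℝ)+1+(n:ℕ)))⁻¹) := by
    intro i
    have e1 : ((Equiv.pnatEquivNat.symm i : ℕ+):ℕ) = i+1 := by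
      simp [Equiv.pnatEquivNat, Nat.succPNat_coe]
    have e2 : (((Equiv.pnatEquivNat.symm i + n : ℕ+)):ℕ) = i+1+(n:ℕ) := by
      simp [PNat.add_coe, e1]
    rw [P_ofReal, P_ofReal, e1, e2, ← ENNReal.ofReal_mul (by positivity)]
    congr 1
    push_cast
    rw [← mul_inv]
    congr 1
    ring
  rw [tsum_congr hterm]
  rw [← ENNReal.ofReal_tsum_of_nonneg (fun i => by positivity) (hasSum_g n).summable]
  rw [(hasSum_g n).tsum_eq, Hterm_eq, P_ofReal, ← ENNReal.ofReal_mul (by positivity)]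
  congr 1
  simp

lemma hsplitA (a : ℕ) : ∑' (m : ℕ+), P m a * Hterm m = Z (a+1) + X2 1 a := by
  have l0 : ∑' (m : ℕ+), P m a * Hterm m
      = ∑' (m : ℕ+) (k : ℕ+), (if (k:ℕ) ≤ (m:ℕ) then P m a * P k 1 else 0) := by
    refine tsum_congr fun m => ?_
    rw [Hterm, ← ENNReal.tsum_mul_left]
    exact tsum_congr fun k => by rw [mul_ite, mul_zero]
  rw [l0, tri2 (fun m k => if (k:ℕ) ≤ (m:ℕ) then P m a * P k 1 else 0)]
  have p1 : ∑' (m : ℕ+) (j : ℕ+), (if ((m+j:ℕ+):ℕ) ≤ (m:ℕ) then P m a * P (m+j) 1 else 0) = 0 := by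
    rw [ENNReal.tsum_eq_zero]
    intro m
    rw [ENNReal.tsum_eq_zero]
    intro j
    rw [if_neg]
    rw [PNat.add_coe]
    have := j.pos
    omega
  have p2 : ∑' (m : ℕ+), (if (m:ℕ) ≤ (m:ℕ) then P m a * P m 1 else 0) = Z (a+1) := by
    rw [Z]
    exact tsum_congr fun m => by rw [if_pos le_rfl, P_mul]
  have p3 : ∑' (k : ℕ+) (d : ℕ+), (if (k:ℕ) ≤ ((k+d:ℕ+):ℕ) then P (k+d) a * P k 1 else 0)
      = X2 1 a := by
    rw [X2]
    refine tsum_congr fun k => tsum_congr fun d => ?_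
    rw [if_pos (by rw [PNat.add_coe]; omega), mul_comm]
  rw [p1, p2, p3, zero_add]

lemma hsplitB (a b : ℕ) : ∑' (m : ℕ+) (u : ℕ+), P m a * P (m+u) b * Hterm (m+u)
    = (X3 a 1 b + X2 a (b+1)) + X2 (a+1) b + X3 1 a b := by
  have l0 : ∑' (m : ℕ+) (u : ℕ+), P m a * P (m+u) b * Hterm (m+u)
      = ∑' (m : ℕ+) (k : ℕ+) (u : ℕ+),
          (if (k:ℕ) ≤ ((m+u:ℕ+):ℕ) then P m a * P (m+u) b * P k 1 else 0) := by
    refine tsum_congr fun m => ?_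
    rw [ENNReal.tsum_comm (f := fun (k u : ℕ+) =>
      (if (k:ℕ) ≤ ((m+u:ℕ+):ℕ) then P m a * P (m+u) b * P k 1 else 0))]
    refine tsum_congr fun u => ?_
    rw [Hterm, ← ENNReal.tsum_mul_left]
    exact tsum_congr fun k => by rw [mul_ite, mul_zero, mul_comm]
  rw [l0, tri2 (fun m k => ∑' (u : ℕ+),
    (if (k:ℕ) ≤ ((m+u:ℕ+):ℕ) then P m a * P (m+u) b * P k 1 else 0))]
  congr 1
  · congr 1
    · -- m < k : k = m+d, condition d ≤ u; inner tri2 on (d,u)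
      have inner : ∀ m : ℕ+, ∑' (d : ℕ+) (u : ℕ+),
          (if ((m+d:ℕ+):ℕ) ≤ ((m+u:ℕ+):ℕ) then P m a * P (m+u) b * P (m+d) 1 else 0)
          = (∑' (d : ℕ+) (w : ℕ+), P m a * P (m+d+w) b * P (m+d) 1)
            + ∑' (d : ℕ+), P m a * P (m+d) (b+1) := by
        intro m
        rw [tri2 (fun d u =>
          if ((m+d:ℕ+):ℕ) ≤ ((m+u:ℕ+):ℕ) then P m a * P (m+u) b * P (m+d) 1 else 0)]
        have q1 : ∑' (d : ℕ+) (w : ℕ+),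
            (if ((m+d:ℕ+):ℕ) ≤ ((m+(d+w):ℕ+):ℕ) then P m a * P (m+(d+w)) b * P (m+d) 1 else 0)
            = ∑' (d : ℕ+) (w : ℕ+), P m a * P (m+d+w) b * P (m+d) 1 := by
          refine tsum_congr fun d => tsum_congr fun w => ?_
          rw [if_pos (by simp only [PNat.add_coe]; have := w.pos; omega), ← add_assoc]
        have q2 : ∑' (d : ℕ+),
            (if ((m+d:ℕ+):ℕ) ≤ ((m+d:ℕ+):ℕ) then P m a * P (m+d) b * P (m+d) 1 else 0)
            = ∑' (d : ℕ+), P m a * P (m+d) (b+1) := by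
          refine tsum_congr fun d => ?_
          rw [if_pos le_rfl, mul_assoc, P_mul]
        have q3 : ∑' (u : ℕ+) (e : ℕ+),
            (if ((m+(u+e):ℕ+):ℕ) ≤ ((m+u:ℕ+):ℕ) then P m a * P (m+u) b * P (m+(u+e)) 1 else 0)
            = 0 := by
          rw [ENNReal.tsum_eq_zero]
          intro u
          rw [ENNReal.tsum_eq_zero]
          intro e
          rw [if_neg]
          simp only [PNat.add_coe]
          have := e.pos
          omega
        rw [q1, q2, q3, add_zero]
      calc ∑' (m : ℕ+) (d : ℕ+) (u : ℕ+),
            (if ((m+d:ℕ+):ℕ) ≤ ((m+u:ℕ+):ℕ) then P m a * P (m+u) b * P (m+d) 1 else 0)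
          = ∑' (m : ℕ+), ((∑' (d : ℕ+) (w : ℕ+), P m a * P (m+d+w) b * P (m+d) 1)
              + ∑' (d : ℕ+), P m a * P (m+d) (b+1)) := tsum_congr fun m => inner m
        _ = X3 a 1 b + X2 a (b+1) := by
            rw [ENNReal.tsum_add, X3, X2]
            congr 1
            refine tsum_congr fun m => tsum_congr fun d => tsum_congr fun w => ?_
            ring
    · -- k = m
      rw [X2]
      refine tsum_congr fun m => ?_
      refine tsum_congr fun u => ?_
      rw [if_pos (by simp only [PNat.add_coe]; omega)]
      rw [mul_comm (P m a) (P (m+u) b), mul_assoc, P_mul, mul_comm]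
  · -- m > k : m = k+j
    rw [X3]
    refine tsum_congr fun k => tsum_congr fun j => tsum_congr fun u => ?_
    rw [if_pos (by simp only [PNat.add_coe]; omega)]
    ring

-- from t8.lean
lemma tadd3 (f g : ℕ+ → ℕ+ → ℕ+ → ℝ≥0∞) :
    ∑' (m : ℕ+) (u : ℕ+) (v : ℕ+), (f m u v + g m u v)
      = (∑' (m : ℕ+) (u : ℕ+) (v : ℕ+), f m u v) + ∑' (m : ℕ+) (u : ℕ+) (v : ℕ+), g m u v := by
  rw [← ENNReal.tsum_add]
  refine tsum_congr fun m => ?_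
  rw [← ENNReal.tsum_add]
  refine tsum_congr fun u => ?_
  exact ENNReal.tsum_add

/-- T2 s 1 1 via harmonic sums -/
lemma tg (s : ℕ) : T2 s 1 1 = Z (s+2) + X2 1 (s+1) := by
  have l1 : T2 s 1 1 = ∑' (m : ℕ+), P m (s+1) * Hterm m := by
    rw [T2]
    refine tsum_congr fun m => ?_
    have l2 : ∑' (u : ℕ+), P m s * P u 1 * P (m+u) 1
        = P m s * ∑' (u : ℕ+), P u 1 * P (u+m) 1 := by
      rw [← ENNReal.tsum_mul_left]
      refine tsum_congr fun u => ?_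
      rw [add_comm u m, mul_assoc]
    rw [l2, glem m, ← mul_assoc, P_mul]
  rw [l1, hsplitA (s+1)]

/-- the W-sum for E6, harmonic evaluation -/
lemma WH (a b : ℕ) :
    ∑' (m : ℕ+) (u : ℕ+) (v : ℕ+), P m a * P (m+u) b * (P v 1 * P (m+u+v) 1)
      = (X3 a 1 (b+1) + X2 a (b+2)) + X2 (a+1) (b+1) + X3 1 a (b+1) := by
  have l1 : ∑' (m : ℕ+) (u : ℕ+) (v : ℕ+), P m a * P (m+u) b * (P v 1 * P (m+u+v) 1)
      = ∑' (m : ℕ+) (u : ℕ+), P m a * P (m+u) (b+1) * Hterm (m+u) := by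
    refine tsum_congr fun m => tsum_congr fun u => ?_
    have l2 : ∑' (v : ℕ+), P m a * P (m+u) b * (P v 1 * P (m+u+v) 1)
        = (P m a * P (m+u) b) * ∑' (v : ℕ+), P v 1 * P (v+(m+u)) 1 := by
      rw [← ENNReal.tsum_mul_left]
      exact tsum_congr fun v => by rw [add_comm v (m+u)]
    rw [l2, glem (m+u), ← mul_assoc, mul_assoc (P m a), P_mul]
  rw [l1, hsplitB a (b+1)]

/-- swap of second and third chain variable -/
lemma swap23 (a c : ℕ) :
    ∑' (m : ℕ+) (u : ℕ+) (v : ℕ+), P m a * P v 1 * P (m+u+v) c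
      = ∑' (m : ℕ+) (u : ℕ+) (v : ℕ+), P m a * P u 1 * P (m+u+v) c := by
  refine tsum_congr fun m => ?_
  rw [ENNReal.tsum_comm (f := fun (u v : ℕ+) => P m a * P v 1 * P (m+u+v) c)]
  refine tsum_congr fun v => tsum_congr fun u => ?_
  rw [add_right_comm]

/-- swap of first and second chain variable (when both have the full tail) -/
lemma swap12 (b c : ℕ) :
    ∑' (m : ℕ+) (u : ℕ+) (v : ℕ+), P u 1 * P (m+u) b * P (m+u+v) c
      = ∑' (m : ℕ+) (u : ℕ+) (v : ℕ+), P m 1 * P (m+u) b * P (m+u+v) c := by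
  rw [ENNReal.tsum_comm (f := fun (m u : ℕ+) => ∑' (v : ℕ+), P u 1 * P (m+u) b * P (m+u+v) c)]
  refine tsum_congr fun u => tsum_congr fun m => tsum_congr fun v => ?_
  rw [add_comm u m]

lemma W3eval (c : ℕ) :
    ∑' (m : ℕ+) (u : ℕ+) (v : ℕ+), P m 1 * P v 1 * P (m+u+v) (c+1)
      = 2 * X3 1 1 (c+1) := by
  rw [swap23]
  have pt : ∀ (m u v : ℕ+), P m 1 * P u 1 * P (m+u+v) (c+1)
      = P m 1 * P (m+u) 1 * P (m+u+v) (c+1) + P u 1 * P (m+u) 1 * P (m+u+v) (c+1) := by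
    intro m u v
    rw [key m u]
    ring
  rw [tsum_congr fun m => tsum_congr fun u => tsum_congr fun v => pt m u v, tadd3, swap12, X3,
    two_mul]

lemma E6pf :
    ∑' (m : ℕ+) (u : ℕ+) (v : ℕ+), P m 1 * P (m+u) 2 * (P v 1 * P (m+u+v) 1)
      = X3 1 2 2 + (X3 1 1 3 + 2 * X3 1 1 3) := by
  have pt1 : ∀ (m u v : ℕ+), P m 1 * P (m+u) 2 * (P v 1 * P (m+u+v) 1)
      = P m 1 * P (m+u) 2 * P (m+u+v) 2
        + P m 1 * P (m+u) 1 * (P v 1 * P (m+u+v) 2) := by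
    intro m u v
    have e : P (m+u) 2 * P v 1 = P (m+u) 1 * (P (m+u+v) 1 * P (m+u) 1)
        + P (m+u) 1 * (P (m+u+v) 1 * P v 1) := by
      rw [← mul_add, ← key (m+u) v, ← mul_assoc, P_mul]
    calc P m 1 * P (m+u) 2 * (P v 1 * P (m+u+v) 1)
        = P m 1 * (P (m+u) 2 * P v 1) * P (m+u+v) 1 := by ring
      _ = P m 1 * (P (m+u) 1 * (P (m+u+v) 1 * P (m+u) 1)
            + P (m+u) 1 * (P (m+u+v) 1 * P v 1)) * P (m+u+v) 1 := by rw [e]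
      _ = P m 1 * (P (m+u) 1 * P (m+u) 1) * (P (m+u+v) 1 * P (m+u+v) 1)
            + P m 1 * P (m+u) 1 * (P v 1 * (P (m+u+v) 1 * P (m+u+v) 1)) := by ring
      _ = _ := by simp only [P_mul]; try norm_num
  rw [tsum_congr fun m => tsum_congr fun u => tsum_congr fun v => pt1 m u v, tadd3]
  congr 1
  -- second piece: ∑ P m 1 * P (m+u) 1 * (P v 1 * P (m+u+v) 2)
  have pt2 : ∀ (m u v : ℕ+), P m 1 * P (m+u) 1 * (P v 1 * P (m+u+v) 2)
      = P m 1 * P (m+u) 1 * P (m+u+v) 3 + P m 1 * P v 1 * P (m+u+v) 3 := by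
    intro m u v
    have e : P (m+u) 1 * P v 1 = P (m+u+v) 1 * P (m+u) 1 + P (m+u+v) 1 * P v 1 := key (m+u) v
    calc P m 1 * P (m+u) 1 * (P v 1 * P (m+u+v) 2)
        = P m 1 * (P (m+u) 1 * P v 1) * P (m+u+v) 2 := by ring
      _ = P m 1 * (P (m+u+v) 1 * P (m+u) 1 + P (m+u+v) 1 * P v 1) * P (m+u+v) 2 := by rw [e]
      _ = P m 1 * P (m+u) 1 * (P (m+u+v) 1 * P (m+u+v) 2)
            + P m 1 * P v 1 * (P (m+u+v) 1 * P (m+u+v) 2) := by ring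
      _ = _ := by simp only [P_mul]; try norm_num
  rw [tsum_congr fun m => tsum_congr fun u => tsum_congr fun v => pt2 m u v, tadd3]
  have w3 := W3eval 2
  norm_num at w3
  rw [w3, X3]

lemma E7pf :
    ∑' (m : ℕ+) (u : ℕ+) (v : ℕ+), P m 2 * P (m+u) 1 * (P v 1 * P (m+u+v) 1)
      = X3 2 1 2 + (X3 2 1 2 + (X3 1 2 2 + X3 1 2 2)) := by
  have pt1 : ∀ (m u v : ℕ+), P m 2 * P (m+u) 1 * (P v 1 * P (m+u+v) 1)
      = P m 2 * P (m+u) 1 * P (m+u+v) 2 + P m 2 * P v 1 * P (m+u+v) 2 := by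
    intro m u v
    have e : P (m+u) 1 * P v 1 = P (m+u+v) 1 * P (m+u) 1 + P (m+u+v) 1 * P v 1 := key (m+u) v
    calc P m 2 * P (m+u) 1 * (P v 1 * P (m+u+v) 1)
        = P m 2 * (P (m+u) 1 * P v 1) * P (m+u+v) 1 := by ring
      _ = P m 2 * (P (m+u+v) 1 * P (m+u) 1 + P (m+u+v) 1 * P v 1) * P (m+u+v) 1 := by rw [e]
      _ = P m 2 * P (m+u) 1 * (P (m+u+v) 1 * P (m+u+v) 1)
            + P m 2 * P v 1 * (P (m+u+v) 1 * P (m+u+v) 1) := by ring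
      _ = _ := by simp only [P_mul]; try norm_num
  rw [tsum_congr fun m => tsum_congr fun u => tsum_congr fun v => pt1 m u v, tadd3]
  congr 1
  -- second piece W5 := ∑ P m 2 * P v 1 * P (m+u+v) 2 ; swap u,v then split m-side
  have s1 : ∑' (m : ℕ+) (u : ℕ+) (v : ℕ+), P m 2 * P v 1 * P (m+u+v) 2
      = ∑' (m : ℕ+) (u : ℕ+) (v : ℕ+), P m 2 * P u 1 * P (m+u+v) 2 := swap23 2 2
  rw [s1]
  have pt2 : ∀ (m u v : ℕ+), P m 2 * P u 1 * P (m+u+v) 2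
      = P m 2 * P (m+u) 1 * P (m+u+v) 2
        + P m 1 * P u 1 * (P (m+u) 1 * P (m+u+v) 2) := by
    intro m u v
    have e : P m 1 * P u 1 = P (m+u) 1 * P m 1 + P (m+u) 1 * P u 1 := key m u
    calc P m 2 * P u 1 * P (m+u+v) 2
        = P m 1 * (P m 1 * P u 1) * P (m+u+v) 2 := by
          rw [show (2:ℕ) = 1+1 from rfl, ← P_mul m 1 1]; ring
      _ = P m 1 * (P (m+u) 1 * P m 1 + P (m+u) 1 * P u 1) * P (m+u+v) 2 := by rw [e]
      _ = (P m 1 * P m 1) * P (m+u) 1 * P (m+u+v) 2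
            + P m 1 * P u 1 * (P (m+u) 1 * P (m+u+v) 2) := by ring
      _ = _ := by simp only [P_mul]; try norm_num
  rw [tsum_congr fun m => tsum_congr fun u => tsum_congr fun v => pt2 m u v, tadd3]
  congr 1
  -- third piece W6 := ∑ P m 1 * P u 1 * (P (m+u) 1 * P (m+u+v) 2)
  have pt3 : ∀ (m u v : ℕ+), P m 1 * P u 1 * (P (m+u) 1 * P (m+u+v) 2)
      = P m 1 * P (m+u) 2 * P (m+u+v) 2 + P u 1 * P (m+u) 2 * P (m+u+v) 2 := by
    intro m u v
    have e : P m 1 * P u 1 = P (m+u) 1 * P m 1 + P (m+u) 1 * P u 1 := key m u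
    calc P m 1 * P u 1 * (P (m+u) 1 * P (m+u+v) 2)
        = (P (m+u) 1 * P m 1 + P (m+u) 1 * P u 1) * (P (m+u) 1 * P (m+u+v) 2) := by rw [← e]
      _ = P m 1 * (P (m+u) 1 * P (m+u) 1) * P (m+u+v) 2
            + P u 1 * (P (m+u) 1 * P (m+u) 1) * P (m+u+v) 2 := by ring
      _ = _ := by simp only [P_mul]; try norm_num
  rw [tsum_congr fun m => tsum_congr fun u => tsum_congr fun v => pt3 m u v, tadd3, swap12, X3]

-- from t9.lean
lemma P_le_P (n : ℕ+) {a b : ℕ} (h : a ≤ b) : P n b ≤ P n a := by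
  rw [P, P]
  apply ENNReal.inv_le_inv.2
  apply pow_le_pow_right₀ _ h
  exact_mod_cast n.one_le

lemma P_mono {x y : ℕ+} (a : ℕ) (h : x ≤ y) : P y a ≤ P x a := by
  rw [P, P]
  apply ENNReal.inv_le_inv.2
  apply pow_le_pow_left' _ a
  exact_mod_cast h

lemma Z2_fin : Z 2 ≠ ⊤ := by
  have hsum : Summable (fun i : ℕ => (((i:ℝ)+1)^2)⁻¹) := by
    have h := (Real.summable_one_div_nat_pow (p := 2)).2 one_lt_two
    have := (summable_nat_add_iff 1).2 h
    simpa [one_div] using this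
  have : Z 2 = ENNReal.ofReal (∑' i : ℕ, (((i:ℝ)+1)^2)⁻¹) := by
    rw [Z, ← Equiv.pnatEquivNat.symm.tsum_eq (f := fun n : ℕ+ => P n 2),
      ENNReal.ofReal_tsum_of_nonneg (fun i => by positivity) hsum]
    refine tsum_congr fun i => ?_
    rw [P_ofReal]
    congr 2
    simp [Equiv.pnatEquivNat, Nat.succPNat_coe]
  rw [this]
  exact ENNReal.ofReal_ne_top

lemma Z_fin {s : ℕ} (h : 2 ≤ s) : Z s ≠ ⊤ := by
  have : Z s ≤ Z 2 := Summable.tsum_le_tsum (fun n => P_le_P n h) ENNReal.summable ENNReal.summable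
  exact fun ht => Z2_fin (top_le_iff.1 (ht ▸ this))

lemma ibound (m : ℕ+) : ∑' (u : ℕ+), P (m+u) 2 ≤ P m 1 := by
  set M : ℝ := ((m:ℕ):ℝ) with hM
  have hMpos : (0:ℝ) < M := by rw [hM]; exact_mod_cast m.pos
  have hmono : ∀ i : ℕ, (M+(i+1):ℝ)⁻¹ ≤ (M+i)⁻¹ := by
    intro i
    apply inv_anti₀ (by positivity)
    push_cast; linarith
  have h0 := hasSum_tele (fun i : ℕ => (M+i)⁻¹)
    (fun i => by push_cast; exact hmono i)
    (by simpa [add_comm] using tendsto_inv_shift M)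
  have h1 : HasSum (fun i : ℕ => (M+i)⁻¹ - (M+(i+1))⁻¹) ((M+(0:ℝ))⁻¹) := by
    push_cast at h0
    exact h0
  have bound : ∀ i : ℕ, ((M+i+1)^2)⁻¹ ≤ (M+i)⁻¹ - (M+(i+1))⁻¹ := by
    intro i
    have he : (M+i)⁻¹ - (M+(i+1):ℝ)⁻¹ = ((M+i)*(M+i+1))⁻¹ := by
      have p1 : (0:ℝ) < M+i := by positivity
      have p2 : (0:ℝ) < M+(i+1) := by positivity
      rw [inv_sub_inv (ne_of_gt p1) (ne_of_gt p2),
        show (M+(i+1):ℝ) - (M+i) = 1 by ring, one_div]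
      ring_nf
    rw [he]
    apply inv_anti₀ (by positivity)
    rw [sq]
    apply mul_le_mul_of_nonneg_right (by linarith) (by positivity)
  have l0 : ∑' (u : ℕ+), P (m+u) 2 = ∑' i : ℕ, ENNReal.ofReal (((M+i+1)^2)⁻¹) := by
    rw [← Equiv.pnatEquivNat.symm.tsum_eq (f := fun u : ℕ+ => P (m+u) 2)]
    refine tsum_congr fun i => ?_
    rw [P_ofReal]
    congr 2
    have : ((m + Equiv.pnatEquivNat.symm i : ℕ+):ℕ) = (m:ℕ) + i + 1 := by
      simp [Equiv.pnatEquivNat, PNat.add_coe, Nat.succPNat_coe]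
      try omega
    rw [this]
    push_cast
    rw [hM]
  calc ∑' (u : ℕ+), P (m+u) 2
      = ∑' i : ℕ, ENNReal.ofReal (((M+i+1)^2)⁻¹) := l0
    _ ≤ ∑' i : ℕ, ENNReal.ofReal ((M+i)⁻¹ - (M+(i+1))⁻¹) :=
        Summable.tsum_le_tsum (fun i => ENNReal.ofReal_le_ofReal (bound i))
          ENNReal.summable ENNReal.summable
    _ = ENNReal.ofReal ((M+(0:ℝ))⁻¹) := by
        rw [← ENNReal.ofReal_tsum_of_nonneg
          (fun i => sub_nonneg.2 (hmono i)) h1.summable, h1.tsum_eq]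
    _ = P m 1 := by
        rw [P_ofReal]
        congr 1
        rw [pow_one, hM]
        norm_num

lemma X12_fin : X2 1 2 ≠ ⊤ := by
  have : X2 1 2 ≤ Z 2 := by
    rw [X2, Z]
    refine Summable.tsum_le_tsum (fun m => ?_) ENNReal.summable ENNReal.summable
    calc ∑' (u : ℕ+), P m 1 * P (m+u) 2
        = P m 1 * ∑' (u : ℕ+), P (m+u) 2 := ENNReal.tsum_mul_left
      _ ≤ P m 1 * P m 1 := mul_le_mul_right (ibound m) _
      _ = P m 2 := P_mul m 1 1
  exact fun ht => Z2_fin (top_le_iff.1 (ht ▸ this))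

lemma X113_le : X3 1 1 3 ≤ X3 1 2 2 := by
  rw [X3, X3]
  refine Summable.tsum_le_tsum (fun m => Summable.tsum_le_tsum (fun u => Summable.tsum_le_tsum (fun v => ?_)
    ENNReal.summable ENNReal.summable) ENNReal.summable ENNReal.summable)
    ENNReal.summable ENNReal.summable
  have h1 : P (m+u+v) 3 = P (m+u+v) 1 * P (m+u+v) 2 := (P_mul _ 1 2).symm
  have h2 : P (m+u+v) 1 ≤ P (m+u) 1 := P_mono 1 (le_of_lt (by
    rw [← PNat.coe_lt_coe]
    simp only [PNat.add_coe]
    have := v.pos; omega))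
  calc P m 1 * P (m+u) 1 * P (m+u+v) 3
      = P m 1 * (P (m+u) 1 * P (m+u+v) 1) * P (m+u+v) 2 := by rw [h1]; ring
    _ ≤ P m 1 * (P (m+u) 1 * P (m+u) 1) * P (m+u+v) 2 := by
        apply mul_le_mul_left
        apply mul_le_mul_right
        exact mul_le_mul_right h2 _
    _ = P m 1 * P (m+u) 2 * P (m+u+v) 2 := by rw [P_mul]

-- from t10.lean
lemma P_toReal (n : ℕ+) (a : ℕ) : (P n a).toReal = (((n:ℕ):ℝ)^a)⁻¹ := by
  rw [P, ENNReal.toReal_inv, ENNReal.toReal_pow]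
  norm_num

def g2 (p : ℕ+ × ℕ+) : {f : Fin 2 → ℕ+ // StrictMono f} :=
  ⟨![p.1, p.1 + p.2], by
    intro i j hij
    fin_cases i <;> fin_cases j <;> simp_all <;> exact plt_add _ _⟩

lemma g2_bij : Function.Bijective g2 := by
  constructor
  · intro p q h
    have h0 := congrArg (fun s => s.1 0) h
    have h1 := congrArg (fun s => s.1 1) h
    simp [g2] at h0 h1
    have c0 := congrArg PNat.val h0
    have c1 := congrArg PNat.val h1
    simp only [PNat.add_coe] at c1
    refine Prod.ext h0 (PNat.coe_injective ?_)
    omega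
  · rintro ⟨f, hf⟩
    have hlt : f 0 < f 1 := hf (by decide)
    have hlt' := (PNat.coe_lt_coe _ _).2 hlt
    refine ⟨(f 0, ⟨(f 1:ℕ) - (f 0:ℕ), by omega⟩), ?_⟩
    apply Subtype.ext
    funext i
    fin_cases i
    · rfl
    · show f 0 + _ = f 1
      apply PNat.coe_injective
      show (f 0:ℕ) + ((f 1:ℕ) - (f 0:ℕ)) = (f 1:ℕ)
      omega

noncomputable def E2 : ℕ+ × ℕ+ ≃ {f : Fin 2 → ℕ+ // StrictMono f} := Equiv.ofBijective g2 g2_bij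

lemma bridge2 (a b : ℕ) : mzv [a,b] = (X2 a b).toReal := by
  have hX : X2 a b = ∑' p : ℕ+ × ℕ+, P p.1 a * P (p.1+p.2) b :=
    (ENNReal.tsum_prod' (f := fun p : ℕ+ × ℕ+ => P p.1 a * P (p.1+p.2) b)).symm
  rw [hX, ENNReal.tsum_toReal_eq (fun p => by
    exact ENNReal.mul_ne_top (P_ne_top _ _) (P_ne_top _ _))]
  have e := Equiv.tsum_eq E2 (f := fun m : {f : Fin 2 → ℕ+ // StrictMono f} =>
    ∏ i : Fin 2, ((m.1 i : ℝ) ^ ([a,b].get i))⁻¹)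
  have h0 : mzv [a,b] = ∑' p : ℕ+ × ℕ+, ∏ i : Fin 2, (((g2 p).1 i : ℝ) ^ ([a,b].get i))⁻¹ := by
    rw [mzv]; exact e.symm
  rw [h0]
  refine tsum_congr fun p => ?_
  rw [ENNReal.toReal_mul, P_toReal, P_toReal]
  rw [Fin.prod_univ_two]
  simp [g2]

def g3 (p : ℕ+ × ℕ+ × ℕ+) : {f : Fin 3 → ℕ+ // StrictMono f} :=
  ⟨![p.1, p.1 + p.2.1, p.1 + p.2.1 + p.2.2], by
    intro i j hij
    fin_cases i <;> fin_cases j <;> simp_all <;>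
      first
        | exact plt_add _ _
        | exact lt_trans (plt_add _ _) (plt_add _ _)⟩

lemma g3_bij : Function.Bijective g3 := by
  constructor
  · intro p q h
    have h0 := congrArg (fun s => s.1 0) h
    have h1 := congrArg (fun s => s.1 1) h
    have h2 := congrArg (fun s => s.1 2) h
    simp [g3] at h0 h1 h2
    have c0 := congrArg PNat.val h0
    have c1 := congrArg PNat.val h1
    have c2 := congrArg PNat.val h2
    simp only [PNat.add_coe] at c1 c2
    refine Prod.ext h0 (Prod.ext (PNat.coe_injective ?_) (PNat.coe_injective ?_)) <;> omega
  · rintro ⟨f, hf⟩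
    have hlt : f 0 < f 1 := hf (by decide)
    have hlt2 : f 1 < f 2 := hf (by decide)
    have hl1 := (PNat.coe_lt_coe _ _).2 hlt
    have hl2 := (PNat.coe_lt_coe _ _).2 hlt2
    refine ⟨(f 0, ⟨(f 1:ℕ) - (f 0:ℕ), by omega⟩, ⟨(f 2:ℕ) - (f 1:ℕ), by omega⟩), ?_⟩
    apply Subtype.ext
    funext i
    fin_cases i
    · rfl
    · show f 0 + _ = f 1
      apply PNat.coe_injective
      show (f 0:ℕ) + ((f 1:ℕ) - (f 0:ℕ)) = (f 1:ℕ)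
      omega
    · show f 0 + _ + _ = f 2
      apply PNat.coe_injective
      show (f 0:ℕ) + ((f 1:ℕ) - (f 0:ℕ)) + ((f 2:ℕ) - (f 1:ℕ)) = (f 2:ℕ)
      omega

noncomputable def E3 : ℕ+ × ℕ+ × ℕ+ ≃ {f : Fin 3 → ℕ+ // StrictMono f} :=
  Equiv.ofBijective g3 g3_bij

lemma bridge3 (a b c : ℕ) : mzv [a,b,c] = (X3 a b c).toReal := by
  have hX : X3 a b c = ∑' p : ℕ+ × ℕ+ × ℕ+, P p.1 a * P (p.1+p.2.1) b * P (p.1+p.2.1+p.2.2) c := by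
    rw [X3, ENNReal.tsum_prod' (f := fun p : ℕ+ × ℕ+ × ℕ+ =>
      P p.1 a * P (p.1+p.2.1) b * P (p.1+p.2.1+p.2.2) c)]
    refine tsum_congr fun m => ?_
    exact (ENNReal.tsum_prod' (f := fun q : ℕ+ × ℕ+ => P m a * P (m+q.1) b * P (m+q.1+q.2) c)).symm
  rw [hX, ENNReal.tsum_toReal_eq (fun p => by
    exact ENNReal.mul_ne_top (ENNReal.mul_ne_top (P_ne_top _ _) (P_ne_top _ _)) (P_ne_top _ _))]
  have e := Equiv.tsum_eq E3 (f := fun m : {f : Fin 3 → ℕ+ // StrictMono f} =>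
    ∏ i : Fin 3, ((m.1 i : ℝ) ^ ([a,b,c].get i))⁻¹)
  have h0 : mzv [a,b,c] = ∑' p : ℕ+ × ℕ+ × ℕ+,
      ∏ i : Fin 3, (((g3 p).1 i : ℝ) ^ ([a,b,c].get i))⁻¹ := by
    rw [mzv]; exact e.symm
  rw [h0]
  refine tsum_congr fun p => ?_
  rw [ENNReal.toReal_mul, ENNReal.toReal_mul, P_toReal, P_toReal, P_toReal]
  rw [Fin.prod_univ_three]
  simp [g3]

theorem mzv_rel_16 :
    4 * mzv [1,4] - 2 * mzv [2,3] - mzv [3,2] + mzv [1,1,3] + 3 * mzv [1,2,2] = 0 := by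
  -- ENNReal identities
  have e1 := E1
  have e2 : Z 2 * Z 3 = 2 * (X2 2 3 + 2 * X2 1 4) + (X2 2 3 + 2 * X2 1 4 + X2 3 2) := by
    rw [zmul 2 3, t230]
  have e3 : Z 5 + X2 1 4 = X2 3 2 + (X2 2 3 + 2 * X2 1 4) := by
    have h := tg 3
    norm_num at h
    rw [← h, t311]
  have e5 : Z 3 + X2 1 2 = 2 * X2 1 2 := by
    have h := tg 1
    norm_num at h
    rw [← h, t111]
  have e4 := E4
  have e6 : (X3 1 1 3 + X2 1 4) + X2 2 3 + X3 1 1 3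
      = X3 1 2 2 + (X3 1 1 3 + 2 * X3 1 1 3) := by
    have h := WH 1 2
    norm_num at h
    rw [← h]
    exact E6pf
  have e7 : (X3 2 1 2 + X2 2 3) + X2 3 2 + X3 1 2 2
      = X3 2 1 2 + (X3 2 1 2 + (X3 1 2 2 + X3 1 2 2)) := by
    have h := WH 2 1
    norm_num at h
    rw [← h]
    exact E7pf
  -- finiteness
  have fz2 : Z 2 ≠ ⊤ := Z2_fin
  have fz3 : Z 3 ≠ ⊤ := Z_fin (by norm_num)
  have fz5 : Z 5 ≠ ⊤ := Z_fin (by norm_num)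
  have fc : Z 2 * Z 3 ≠ ⊤ := ENNReal.mul_ne_top fz2 fz3
  have hne : ∀ {x y : ℝ≥0∞}, x ≤ y → y ≠ ⊤ → x ≠ ⊤ :=
    fun hxy hy => (lt_of_le_of_lt hxy (lt_top_iff_ne_top.2 hy)).ne
  have f23 : X2 2 3 ≠ ⊤ := by
    refine hne ?_ fc
    rw [e1]
    calc X2 2 3 ≤ X2 2 3 + Z 5 := le_self_add
      _ ≤ X2 2 3 + Z 5 + X2 3 2 := le_self_add
  have f32 : X2 3 2 ≠ ⊤ := by
    refine hne ?_ fc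
    rw [e1]
    exact le_add_self
  have f14 : X2 1 4 ≠ ⊤ := by
    refine hne ?_ fc
    rw [e2]
    calc X2 1 4 ≤ X2 2 3 + 2 * X2 1 4 := by
          rw [two_mul (X2 1 4), ← add_assoc]; exact le_add_self
      _ ≤ 2 * (X2 2 3 + 2 * X2 1 4) := by
          rw [two_mul (X2 2 3 + 2 * X2 1 4)]; exact le_add_self
      _ ≤ _ := le_self_add
  have f12 : X2 1 2 ≠ ⊤ := X12_fin
  have fcx : Z 2 * X2 1 2 ≠ ⊤ := ENNReal.mul_ne_top fz2 f12
  have f212 : X3 2 1 2 ≠ ⊤ := by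
    refine hne ?_ fcx
    rw [e4]
    calc X3 2 1 2 ≤ X3 2 1 2 + X2 3 2 := le_self_add
      _ ≤ X3 2 1 2 + X2 3 2 + (X3 1 2 2 + X2 1 4 + X3 1 2 2) := le_self_add
  have f122 : X3 1 2 2 ≠ ⊤ := by
    refine hne ?_ fcx
    rw [e4]
    calc X3 1 2 2 ≤ X3 1 2 2 + X2 1 4 := le_self_add
      _ ≤ X3 1 2 2 + X2 1 4 + X3 1 2 2 := le_self_add
      _ ≤ X3 2 1 2 + X2 3 2 + (X3 1 2 2 + X2 1 4 + X3 1 2 2) := le_add_self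
  have f113 : X3 1 1 3 ≠ ⊤ := hne X113_le f122
  have h214 : (2:ℝ≥0∞) * X2 1 4 ≠ ⊤ := ENNReal.mul_ne_top (by norm_num) f14
  have h2113 : (2:ℝ≥0∞) * X3 1 1 3 ≠ ⊤ := ENNReal.mul_ne_top (by norm_num) f113
  -- transfer to ℝ
  have r1 : (Z 2).toReal * (Z 3).toReal
      = (X2 2 3).toReal + (Z 5).toReal + (X2 3 2).toReal := by
    have h := congrArg ENNReal.toReal e1
    rw [ENNReal.toReal_add (ENNReal.add_ne_top.2 ⟨f23, fz5⟩) f32,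
      ENNReal.toReal_add f23 fz5] at h
    simpa only [ENNReal.toReal_mul] using h
  have r2 : (Z 2).toReal * (Z 3).toReal
      = 2 * ((X2 2 3).toReal + 2 * (X2 1 4).toReal)
        + ((X2 2 3).toReal + 2 * (X2 1 4).toReal + (X2 3 2).toReal) := by
    have h := congrArg ENNReal.toReal e2
    simp only [ENNReal.toReal_add (ENNReal.mul_ne_top (by norm_num : (2:ℝ≥0∞) ≠ ⊤)
        (ENNReal.add_ne_top.2 ⟨f23, h214⟩))
        (ENNReal.add_ne_top.2 ⟨ENNReal.add_ne_top.2 ⟨f23, h214⟩, f32⟩),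
      ENNReal.toReal_add (ENNReal.add_ne_top.2 ⟨f23, h214⟩) f32,
      ENNReal.toReal_add f23 h214, ENNReal.toReal_mul, ENNReal.toReal_ofNat] at h
    exact h
  have r3 : (Z 5).toReal + (X2 1 4).toReal
      = (X2 3 2).toReal + ((X2 2 3).toReal + 2 * (X2 1 4).toReal) := by
    have h := congrArg ENNReal.toReal e3
    rw [ENNReal.toReal_add fz5 f14,
      ENNReal.toReal_add f32 (ENNReal.add_ne_top.2 ⟨f23, h214⟩),
      ENNReal.toReal_add f23 h214] at h
    simpa only [ENNReal.toReal_mul, ENNReal.toReal_ofNat] using h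
  have r5 : (Z 3).toReal + (X2 1 2).toReal = 2 * (X2 1 2).toReal := by
    have h := congrArg ENNReal.toReal e5
    rw [ENNReal.toReal_add fz3 f12] at h
    simpa only [ENNReal.toReal_mul, ENNReal.toReal_ofNat] using h
  have r4 : (Z 2).toReal * (X2 1 2).toReal
      = (X3 2 1 2).toReal + (X2 3 2).toReal
        + ((X3 1 2 2).toReal + (X2 1 4).toReal + (X3 1 2 2).toReal) := by
    have h := congrArg ENNReal.toReal e4
    rw [ENNReal.toReal_add (ENNReal.add_ne_top.2 ⟨f212, f32⟩)
        (ENNReal.add_ne_top.2 ⟨ENNReal.add_ne_top.2 ⟨f122, f14⟩, f122⟩),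
      ENNReal.toReal_add f212 f32,
      ENNReal.toReal_add (ENNReal.add_ne_top.2 ⟨f122, f14⟩) f122,
      ENNReal.toReal_add f122 f14] at h
    simpa only [ENNReal.toReal_mul] using h
  have r6 : ((X3 1 1 3).toReal + (X2 1 4).toReal) + (X2 2 3).toReal + (X3 1 1 3).toReal
      = (X3 1 2 2).toReal + ((X3 1 1 3).toReal + 2 * (X3 1 1 3).toReal) := by
    have h := congrArg ENNReal.toReal e6
    rw [ENNReal.toReal_add (ENNReal.add_ne_top.2 ⟨ENNReal.add_ne_top.2 ⟨f113, f14⟩, f23⟩) f113,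
      ENNReal.toReal_add (ENNReal.add_ne_top.2 ⟨f113, f14⟩) f23,
      ENNReal.toReal_add f113 f14,
      ENNReal.toReal_add f122 (ENNReal.add_ne_top.2 ⟨f113, h2113⟩),
      ENNReal.toReal_add f113 h2113] at h
    simpa only [ENNReal.toReal_mul, ENNReal.toReal_ofNat] using h
  have r7 : ((X3 2 1 2).toReal + (X2 2 3).toReal) + (X2 3 2).toReal + (X3 1 2 2).toReal
      = (X3 2 1 2).toReal + ((X3 2 1 2).toReal + ((X3 1 2 2).toReal + (X3 1 2 2).toReal)) := by
    have h := congrArg ENNReal.toReal e7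
    rw [ENNReal.toReal_add (ENNReal.add_ne_top.2 ⟨ENNReal.add_ne_top.2 ⟨f212, f23⟩, f32⟩) f122,
      ENNReal.toReal_add (ENNReal.add_ne_top.2 ⟨f212, f23⟩) f32,
      ENNReal.toReal_add f212 f23,
      ENNReal.toReal_add f212 (ENNReal.add_ne_top.2 ⟨f212, ENNReal.add_ne_top.2 ⟨f122, f122⟩⟩),
      ENNReal.toReal_add f212 (ENNReal.add_ne_top.2 ⟨f122, f122⟩),
      ENNReal.toReal_add f122 f122] at h
    exact h
  -- substitute x12 = z3 in r4
  have hx12 : (X2 1 2).toReal = (Z 3).toReal := by linarith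
  rw [hx12] at r4
  -- bridges
  rw [bridge2 1 4, bridge2 2 3, bridge2 3 2, bridge3 1 1 3, bridge3 1 2 2]
  linarith [r1, r2, r3, r4, r6, r7]
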